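/- Let G be a directed graph with unique source s and sink t. Define a univocal path as a path p = v_1 ... v_k in the t-dominator tree such that v_{i+1} has v_i as its unique child for each i < k, and such that v_k ... v_1 is a path in the s-dominator tree where each vertex except the deepest has exactly one child. Then any two distinct maximal univocal paths of G are vertex-disjoint. -/

import Mathlib

namespace FD

variable {V : Type*}

/-- A walk: nonempty vertex sequence with consecutive pairs edges. -/
def IsWalk (E : V → V → Prop) (l : List V) : Prop := l ≠ [] ∧ l.Chain' E

/-- A walk from `s` to `t`. -/
def IsWalkFromTo (E : V → V → Prop) (s t : V) (l : List V) : Prop :=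
  IsWalk E l ∧ l.head? = some s ∧ l.getLast? = some t

/-- A path from `s` to `t`: a walk with no repeated vertices. -/
def IsPathFromTo (E : V → V → Prop) (s t : V) (l : List V) : Prop :=
  IsWalkFromTo E s t l ∧ l.Nodup

/-- `s` is the unique source: a vertex has no incoming edge iff it is `s`. -/
def UniqueSource (E : V → V → Prop) (s : V) : Prop := ∀ v, (¬ ∃ u, E u v) ↔ v = s

/-- `t` is the unique sink: a vertex has no outgoing edge iff it is `t`. -/
def UniqueSink (E : V → V → Prop) (t : V) : Prop := ∀ v, (¬ ∃ w, E v w) ↔ v = t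

/-- `u` s-dominates `v`: every `s`-`v` path contains `u`. -/
def SDom (E : V → V → Prop) (s u v : V) : Prop := ∀ p, IsPathFromTo E s v p → u ∈ p

/-- `u` t-dominates `v`: every `v`-`t` path contains `u`. -/
def TDom (E : V → V → Prop) (t u v : V) : Prop := ∀ p, IsPathFromTo E v t p → u ∈ p

/-- `l` is the chain of s-dominators of `v`, listed in dominance order from `s` to `v`. -/
def IsSDomChain (E : V → V → Prop) (s v : V) (l : List V) : Prop :=
  l.Nodup ∧ (∀ u, u ∈ l ↔ SDom E s u v) ∧
    l.Chain' (fun a b => SDom E s a b) ∧ l.head? = some s ∧ l.getLast? = some v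

/-- `l` is the chain of t-dominators of `v`, listed in order from `v` to `t`. -/
def IsTDomChain (E : V → V → Prop) (t v : V) (l : List V) : Prop :=
  l.Nodup ∧ (∀ u, u ∈ l ↔ TDom E t u v) ∧
    l.Chain' (fun a b => TDom E t b a) ∧ l.head? = some v ∧ l.getLast? = some t

/-- `x = ext(v)`: the s-dominator chain of `v` (from `s` to `v`) concatenated with the
t-dominator chain of `v` (from `v` to `t`), with the duplicate `v` removed. -/
def IsExtension (E : V → V → Prop) (s t v : V) (x : List V) : Prop :=
  ∃ ds dt, IsSDomChain E s v ds ∧ IsTDomChain E t v dt ∧ x = ds ++ dt.tail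

/-- `P` is a `C`-walk cover: a set of `s`-`t` walks such that every vertex of `C`
lies on some walk of `P`. -/
def WalkCover (E : V → V → Prop) (s t : V) (C : Set V) (P : Set (List V)) : Prop :=
  (∀ w ∈ P, IsWalkFromTo E s t w) ∧ ∀ c ∈ C, ∃ w ∈ P, c ∈ w

/-- `X` is a `C`-safe sequence: every `C`-walk cover contains a walk having `X`
as a subsequence. -/
def SafeSeq (E : V → V → Prop) (s t : V) (C : Set V) (X : List V) : Prop :=
  ∀ P, WalkCover E s t C P → ∃ w ∈ P, X.Sublist w

/-- The list of edges traversed by a walk, in order (with multiplicity). -/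
def walkEdges (l : List V) : List (V × V) := l.zip l.tail

/-- `idoms` is the immediate s-dominator (parent in the s-dominator tree) function:
`idoms s = s`, and for `v ≠ s`, `idoms v` is a strict s-dominator of `v` that is
s-dominated by every strict s-dominator of `v`. -/
def IsIdomS (E : V → V → Prop) (s : V) (idoms : V → V) : Prop :=
  idoms s = s ∧ ∀ v, v ≠ s → idoms v ≠ v ∧ SDom E s (idoms v) v ∧
    ∀ u, u ≠ v → SDom E s u v → SDom E s u (idoms v)

/-- Immediate t-dominator (parent in the t-dominator tree) function. -/
def IsIdomT (E : V → V → Prop) (t : V) (idomt : V → V) : Prop :=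
  idomt t = t ∧ ∀ v, v ≠ t → idomt v ≠ v ∧ TDom E t (idomt v) v ∧
    ∀ u, u ≠ v → TDom E t u v → TDom E t u (idomt v)

/-- In the tree with parent function `par` rooted at `root`, `c` is the unique child
of `p`. -/
def UniqueChild (par : V → V) (root c p : V) : Prop :=
  c ≠ root ∧ par c = p ∧ ∀ y, y ≠ root → par y = p → y = c

/-- A univocal path `v₁ … v_k`: in the t-dominator tree each `v_{i+1}` has `v_i`
as its unique child, and `v_k … v_1` is a path in the s-dominator tree where each
vertex but the deepest (`v_k`) has exactly one child. -/
def IsUnivocal (idoms idomt : V → V) (s t : V) (l : List V) : Prop :=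
  l ≠ [] ∧ l.Chain' (fun a b => UniqueChild idomt t a b ∧ UniqueChild idoms s b a)

/-- A maximal univocal path: not properly contained in another univocal path. -/
def IsMaximalUnivocal (idoms idomt : V → V) (s t : V) (l : List V) : Prop :=
  IsUnivocal idoms idomt s t l ∧
    ∀ l', IsUnivocal idoms idomt s t l' → l <:+: l' → l' = l

/-- `X` is a maximal safe sequence for walk covers (covering all vertices):
it is safe and no proper supersequence of it is safe. -/
def MaximalSafe (E : V → V → Prop) (s t : V) (X : List V) : Prop :=
  SafeSeq E s t Set.univ X ∧ ∀ Y, X.Sublist Y → Y ≠ X → ¬ SafeSeq E s t Set.univ Y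

/-- Edge `e` reaches edge `e'`: there is a (possibly empty) path from the head of `e`
to the tail of `e'`. -/
def EReach (E : V → V → Prop) (e e' : V × V) : Prop := Relation.ReflTransGen E e.2 e'.1

/-- `P` is a cover of the edge set `C` by `s`-`t` walks. -/
def EdgeWalkCover (E : V → V → Prop) (s t : V) (C : Set (V × V)) (P : Set (List V)) : Prop :=
  (∀ w ∈ P, IsWalkFromTo E s t w) ∧ ∀ c ∈ C, ∃ w ∈ P, c ∈ walkEdges w

/-- A `C`-safe sequence of edges: every cover of `C` by `s`-`t` walks contains a walk
traversing the edges of `S` in order. -/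
def SafeEdgeSeq (E : V → V → Prop) (s t : V) (C : Set (V × V)) (S : List (V × V)) : Prop :=
  ∀ P, EdgeWalkCover E s t C P → ∃ w ∈ P, S.Sublist (walkEdges w)

lemma chain_comp {R : V → V → Prop} (hdet : ∀ a b c, R a b → R a c → b = c) :
    ∀ (r₁ r₂ : List V) (x : V), List.Chain' R (x :: r₁) → List.Chain' R (x :: r₂) →
      (x :: r₁) <+: (x :: r₂) ∨ (x :: r₂) <+: (x :: r₁) := by
  intro r₁
  induction r₁ with
  | nil => intro r₂ x _ _; exact Or.inl ⟨r₂, rfl⟩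
  | cons a r₁' ih =>
    intro r₂ x h1 h2
    cases r₂ with
    | nil => exact Or.inr ⟨a :: r₁', rfl⟩
    | cons b r₂' =>
      have hxa : R x a := (List.isChain_cons_cons.mp h1).1
      have hxb : R x b := (List.isChain_cons_cons.mp h2).1
      have hab : a = b := hdet x a b hxa hxb
      subst hab
      rcases ih r₂' a (List.isChain_cons_cons.mp h1).2 (List.isChain_cons_cons.mp h2).2 with ⟨e, he⟩ | ⟨e, he⟩
      · exact Or.inl ⟨e, by simp [← he]⟩
      · exact Or.inr ⟨e, by simp [← he]⟩

lemma chain_comp_suffix {R : V → V → Prop} (hdet : ∀ a b c, R b a → R c a → b = c)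
    (l₁ l₂ : List V) (x : V) (h1 : List.Chain' R (l₁ ++ [x])) (h2 : List.Chain' R (l₂ ++ [x])) :
    (l₁ ++ [x]) <:+ (l₂ ++ [x]) ∨ (l₂ ++ [x]) <:+ (l₁ ++ [x]) := by
  have h1' : List.Chain' (flip R) (x :: l₁.reverse) := by have h := (List.isChain_reverse (R := flip R) (l := l₁ ++ [x])).mpr h1; simp at h; exact h
  have h2' : List.Chain' (flip R) (x :: l₂.reverse) := by have h := (List.isChain_reverse (R := flip R) (l := l₂ ++ [x])).mpr h2; simp at h; exact h
  have hdet' : ∀ a b c, flip R a b → flip R a c → b = c := fun a b c hb hc => hdet a b c hb hc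
  rcases chain_comp hdet' l₁.reverse l₂.reverse x h1' h2' with h | h
  · left
    have : (l₁ ++ [x]).reverse <+: (l₂ ++ [x]).reverse := by simpa using h
    exact List.reverse_prefix.mp this
  · right
    have : (l₂ ++ [x]).reverse <+: (l₁ ++ [x]).reverse := by simpa using h
    exact List.reverse_prefix.mp this

lemma chain_glue {R : V → V → Prop} {L Rr : List V} {x : V}
    (hL : List.Chain' R (L ++ [x])) (hR : List.Chain' R (x :: Rr)) :
    List.Chain' R (L ++ x :: Rr) := by
  rw [show L ++ x :: Rr = (L ++ [x]) ++ Rr by simp]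
  refine List.IsChain.append hL (List.isChain_cons.mp hR).2 ?_
  intro y hy z hz
  simp at hy; subst hy
  exact (List.isChain_cons.mp hR).1 z hz

/-- two distinct maximal univocal paths are vertex-disjoint. -/
theorem stmt2 {V : Type*} [Fintype V] (E : V → V → Prop) (s t : V)
    (hs : UniqueSource E s) (ht : UniqueSink E t)
    (hall : ∀ a : V, ∃ p, IsPathFromTo E s t p ∧ a ∈ p)
    (idoms idomt : V → V) (hids : IsIdomS E s idoms) (hidt : IsIdomT E t idomt)
    (p₁ p₂ : List V)
    (h₁ : IsMaximalUnivocal idoms idomt s t p₁)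
    (h₂ : IsMaximalUnivocal idoms idomt s t p₂)
    (hne : p₁ ≠ p₂) :
    ∀ x, x ∈ p₁ → x ∉ p₂ := by
  intro x hx1 hx2
  set R : V → V → Prop := fun a b => UniqueChild idomt t a b ∧ UniqueChild idoms s b a with hR
  have hfwd : ∀ a b c, R a b → R a c → b = c := by
    intro a b c hb hc
    rw [← hb.1.2.1, ← hc.1.2.1]
  have hbwd : ∀ a b c, R b a → R c a → b = c := by
    intro a b c hb hc
    rw [← hb.2.2.1, ← hc.2.2.1]
  obtain ⟨l₁, r₁, hp₁⟩ := List.append_of_mem hx1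
  obtain ⟨l₂, r₂, hp₂⟩ := List.append_of_mem hx2
  have hc₁ : List.Chain' R p₁ := h₁.1.2
  have hc₂ : List.Chain' R p₂ := h₂.1.2
  have hcr₁ : List.Chain' R (x :: r₁) := hc₁.suffix ⟨l₁, hp₁.symm⟩
  have hcr₂ : List.Chain' R (x :: r₂) := hc₂.suffix ⟨l₂, hp₂.symm⟩
  have hcl₁ : List.Chain' R (l₁ ++ [x]) := hc₁.prefix ⟨r₁, by simp [hp₁]⟩
  have hcl₂ : List.Chain' R (l₂ ++ [x]) := hc₂.prefix ⟨r₂, by simp [hp₂]⟩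
  have hfc := chain_comp hfwd r₁ r₂ x hcr₁ hcr₂
  have hbc := chain_comp_suffix hbwd l₁ l₂ x hcl₁ hcl₂
  apply hne
  rcases hbc with ⟨d, hd⟩ | ⟨d, hd⟩ <;> rcases hfc with ⟨e, he⟩ | ⟨e, he⟩
  · -- l₁++[x] suffix of l₂++[x], x::r₁ prefix of x::r₂ : p₁ infix of p₂
    have hl : l₂ = d ++ l₁ := by
      have : (d ++ l₁) ++ [x] = l₂ ++ [x] := by rw [← hd]; simp
      exact (List.append_left_injective [x] this).symm
    have hinf : p₁ <:+: p₂ := ⟨d, e, by rw [hp₁, hp₂, hl, ← he]; simp⟩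
    exact (h₁.2 p₂ h₂.1 hinf).symm
  · -- mixed: glue u = l₂ ++ x :: r₁
    have hl : l₂ = d ++ l₁ := by
      have : (d ++ l₁) ++ [x] = l₂ ++ [x] := by rw [← hd]; simp
      exact (List.append_left_injective [x] this).symm
    set u : List V := l₂ ++ x :: r₁ with hu
    have hcu : List.Chain' R u := chain_glue hcl₂ hcr₁
    have huu : IsUnivocal idoms idomt s t u := ⟨by simp [hu], hcu⟩
    have h1u : p₁ <:+: u := ⟨d, [], by rw [hp₁, hu, hl]; simp⟩
    have h2u : p₂ <:+: u := ⟨[], e, by rw [hp₂, hu, ← he]; simp⟩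
    rw [← h₁.2 u huu h1u, ← h₂.2 u huu h2u]
  · -- mixed: glue u = l₁ ++ x :: r₂
    have hl : l₁ = d ++ l₂ := by
      have : (d ++ l₂) ++ [x] = l₁ ++ [x] := by rw [← hd]; simp
      exact (List.append_left_injective [x] this).symm
    set u : List V := l₁ ++ x :: r₂ with hu
    have hcu : List.Chain' R u := chain_glue hcl₁ hcr₂
    have huu : IsUnivocal idoms idomt s t u := ⟨by simp [hu], hcu⟩
    have h1u : p₁ <:+: u := ⟨[], e, by rw [hp₁, hu, ← he]; simp⟩
    have h2u : p₂ <:+: u := ⟨d, [], by rw [hp₂, hu, hl]; simp⟩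
    rw [← h₁.2 u huu h1u, ← h₂.2 u huu h2u]
  · -- p₂ infix of p₁
    have hl : l₁ = d ++ l₂ := by
      have : (d ++ l₂) ++ [x] = l₁ ++ [x] := by rw [← hd]; simp
      exact (List.append_left_injective [x] this).symm
    have hinf : p₂ <:+: p₁ := ⟨d, e, by rw [hp₁, hp₂, hl, ← he]; simp⟩
    exact h₂.2 p₁ h₁.1 hinf

end FD
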